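/- For n1, n2 ≥ sk+1, the identity (n1+n2)/k * C(n1+n2 - sk - 1, k-1) = ∑_{j=0}^{k} (n1/(n1 - sj)) C(n1 - sj, j) * (n2/(n2 - s(k-j))) C(n2 - s(k-j), k-j) holds. -/

import Mathlib

open Finset

noncomputable def Jb (a : ℤ) (m : ℕ) : ℚ :=
  (∏ i ∈ Finset.range m, ((a : ℚ) - (i : ℚ))) / (m.factorial : ℚ)

@[simp] lemma Jb_zero (a : ℤ) : Jb a 0 = 1 := by simp [Jb]

lemma Jb_one (a : ℤ) : Jb a 1 = (a : ℚ) := by simp [Jb]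

lemma Jb_pascal (a : ℤ) (m : ℕ) :
    Jb a (m + 1) = Jb (a - 1) (m + 1) + Jb (a - 1) m := by
  have h1 : (∏ i ∈ Finset.range (m+1), ((a:ℚ) - (i:ℚ)))
      = (∏ i ∈ Finset.range m, (((a - 1 : ℤ):ℚ) - (i:ℚ))) * (a:ℚ) := by
    rw [Finset.prod_range_succ']
    congr 1
    · exact Finset.prod_congr rfl (fun i _ => by push_cast; ring)
    · norm_num
  have h2 : (∏ i ∈ Finset.range (m+1), (((a - 1 : ℤ):ℚ) - (i:ℚ)))
      = (∏ i ∈ Finset.range m, (((a - 1 : ℤ):ℚ) - (i:ℚ))) * ((a:ℚ) - 1 - (m:ℚ)) := by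
    rw [Finset.prod_range_succ]
    congr 1
    push_cast; ring
  unfold Jb
  rw [h1, h2]
  have hm : (((m+1).factorial : ℕ) : ℚ) = ((m:ℚ)+1) * (m.factorial : ℚ) := by
    rw [Nat.factorial_succ]; push_cast; ring
  rw [hm]
  have h0 : (m.factorial : ℚ) ≠ 0 := by exact_mod_cast m.factorial_ne_zero
  have h0' : ((m:ℚ)+1) ≠ 0 := by positivity
  field_simp
  ring

lemma Jb_natCast (n m : ℕ) : Jb (n : ℤ) m = (n.choose m : ℚ) := by
  induction n generalizing m with
  | zero =>
    cases m with
    | zero => simp [Jb]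
    | succ m =>
      have h : (∏ i ∈ Finset.range (m+1), ((((0:ℕ):ℤ):ℚ) - (i:ℚ))) = 0 :=
        Finset.prod_eq_zero (Finset.mem_range.mpr (Nat.succ_pos m)) (by simp)
      unfold Jb
      rw [h]
      simp
  | succ n ih =>
    cases m with
    | zero => simp [Jb]
    | succ m =>
      have hp := Jb_pascal ((n:ℤ)+1) m
      have e1 : ((n:ℤ)+1) - 1 = (n:ℤ) := by ring
      rw [e1] at hp
      rw [show ((n+1:ℕ):ℤ) = (n:ℤ)+1 by push_cast; ring, hp, ih, ih,
          Nat.choose_succ_succ]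
      push_cast; ring

noncomputable def Fb (s : ℕ) (a : ℤ) : ℕ → ℚ
  | 0 => 1
  | (j+1) => Jb (a - (s:ℤ) * ((j:ℤ)+1)) (j+1) + (s:ℚ) * Jb (a - (s:ℤ) * ((j:ℤ)+1) - 1) j

@[simp] lemma Fb_zero (s : ℕ) (a : ℤ) : Fb s a 0 = 1 := rfl

lemma Fb_succ (s : ℕ) (a : ℤ) (j : ℕ) :
    Fb s a (j+1) = Jb (a - (s:ℤ) * ((j:ℤ)+1)) (j+1)
      + (s:ℚ) * Jb (a - (s:ℤ) * ((j:ℤ)+1) - 1) j := rfl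


lemma Fb_seed (s j : ℕ) : Fb s 0 (j+1) = 0 := by
  rw [Fb_succ]
  unfold Jb
  rw [Finset.prod_range_succ']
  have e : ∀ i ∈ Finset.range j,
      (((0 - (s:ℤ)*((j:ℤ)+1) : ℤ) : ℚ) - (((i+1:ℕ)):ℚ))
        = (((0 - (s:ℤ)*((j:ℤ)+1) - 1 : ℤ) : ℚ) - (i:ℚ)) := by
    intro i _; push_cast; ring
  rw [Finset.prod_congr rfl e]
  have hm : (((j+1).factorial : ℕ) : ℚ) = ((j:ℚ)+1) * (j.factorial : ℚ) := by
    rw [Nat.factorial_succ]; push_cast; ring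
  rw [hm]
  have h0 : (j.factorial : ℚ) ≠ 0 := by exact_mod_cast j.factorial_ne_zero
  have h0' : ((j:ℚ)+1) ≠ 0 := by positivity
  push_cast
  field_simp
  ring

lemma Fb_pascal (s : ℕ) (a : ℤ) (j : ℕ) :
    Fb s a (j+1) = Fb s (a-1) (j+1) + Fb s (a - (s:ℤ) - 1) j := by
  cases j with
  | zero =>
    rw [Fb_succ, Fb_succ, Fb_zero, Jb_one, Jb_one, Jb_zero, Jb_zero]
    push_cast; ring
  | succ j =>
    rw [Fb_succ s a (j+1), Fb_succ s (a-1) (j+1), Fb_succ s (a - (s:ℤ) - 1) j]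
    rw [show ((((j+1:ℕ)):ℤ)+1) = ((j:ℤ)+1+1) by push_cast; ring]
    rw [show (a - (s:ℤ)*((j:ℤ)+1+1)) = (a - (s:ℤ)*((j:ℤ)+1+1) - 1) + 1 by ring]
    rw [show ((a - (s:ℤ)*((j:ℤ)+1+1) - 1) + 1) - 1 = a - (s:ℤ)*((j:ℤ)+1+1) - 1 by ring]
    rw [Jb_pascal (a - (s:ℤ)*((j:ℤ)+1+1) - 1 + 1) (j+1)]
    rw [show (a - (s:ℤ)*((j:ℤ)+1+1) - 1 + 1) - 1 = a - (s:ℤ)*((j:ℤ)+1+1) - 1 by ring]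
    rw [show (a - (s:ℤ)*((j:ℤ)+1+1) - 1) = (a - (s:ℤ)*((j:ℤ)+1+1) - 2) + 1 by ring]
    rw [Jb_pascal (a - (s:ℤ)*((j:ℤ)+1+1) - 2 + 1) j]
    rw [show (a - (s:ℤ)*((j:ℤ)+1+1) - 2 + 1) - 1 = a - (s:ℤ)*((j:ℤ)+1+1) - 2 by ring]
    rw [show (a - 1 - (s:ℤ)*((j:ℤ)+1+1)) = a - (s:ℤ)*((j:ℤ)+1+1) - 2 + 1 by ring]
    rw [show (a - (s:ℤ)*((j:ℤ)+1+1) - 2 + 1) - 1 = a - (s:ℤ)*((j:ℤ)+1+1) - 2 by ring]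
    rw [show (a - (s:ℤ) - 1 - (s:ℤ)*((j:ℤ)+1)) = a - (s:ℤ)*((j:ℤ)+1+1) - 2 + 1 by ring]
    rw [show (a - (s:ℤ)*((j:ℤ)+1+1) - 2 + 1) - 1 = a - (s:ℤ)*((j:ℤ)+1+1) - 2 by ring]
    have hp := Jb_pascal (a - (s:ℤ)*((j:ℤ)+1+1) - 1) j
    ring_nf at hp ⊢
    linarith [hp]

theorem Fb_conv (s : ℕ) : ∀ (k : ℕ) (a b : ℤ),
    ∑ j ∈ Finset.range (k+1), Fb s a j * Fb s b (k - j) = Fb s (a + b) k := by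
  intro k
  induction k with
  | zero => intro a b; simp [Fb_zero]
  | succ k ih =>
    have step : ∀ (a b : ℤ),
        ∑ j ∈ Finset.range (k+2), Fb s a j * Fb s b (k+1 - j)
          = (∑ j ∈ Finset.range (k+2), Fb s (a-1) j * Fb s b (k+1 - j))
            + Fb s (a - (s:ℤ) - 1 + b) k := by
      intro a b
      rw [Finset.sum_range_succ' (fun j => Fb s a j * Fb s b (k+1-j)) (k+1),
          Finset.sum_range_succ' (fun j => Fb s (a-1) j * Fb s b (k+1-j)) (k+1)]
      have h1 : ∀ i ∈ Finset.range (k+1),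
          Fb s a (i+1) * Fb s b (k+1-(i+1))
            = Fb s (a-1) (i+1) * Fb s b (k+1-(i+1))
              + Fb s (a - (s:ℤ) - 1) i * Fb s b (k - i) := by
        intro i hi
        rw [show k + 1 - (i+1) = k - i by omega, Fb_pascal, add_mul]
      rw [Finset.sum_congr rfl h1, Finset.sum_add_distrib, ih]
      rw [Fb_zero, Fb_zero]
      ring
    intro a b
    induction a using Int.induction_on with
    | zero =>
      rw [Finset.sum_range_succ' (fun j => Fb s 0 j * Fb s b (k+1-j)) (k+1)]
      have h1 : ∀ i ∈ Finset.range (k+1), Fb s 0 (i+1) * Fb s b (k+1-(i+1)) = 0 := by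
        intro i _; rw [Fb_seed]; ring
      rw [Finset.sum_congr rfl h1, Finset.sum_const, Fb_zero, zero_add]
      simp
    | succ a iha =>
      have hstep := step ((a:ℤ)+1) b
      rw [show ((a:ℤ)+1) - 1 = (a:ℤ) by ring] at hstep
      rw [hstep, iha]
      have hpas := Fb_pascal s ((a:ℤ)+1+b) k
      rw [show ((a:ℤ)+1+b) - 1 = (a:ℤ)+b by ring,
          show ((a:ℤ)+1+b) - (s:ℤ) - 1 = (a:ℤ)+1 - (s:ℤ) - 1 + b by ring] at hpas
      linarith [hpas]
    | pred a iha =>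
      have hstep := step (-(a:ℤ)) b
      rw [show (-(a:ℤ)) - 1 = -(a:ℤ)-1 by ring] at hstep
      have hpas := Fb_pascal s (-(a:ℤ)+b) k
      rw [show (-(a:ℤ)+b) - 1 = -(a:ℤ)-1+b by ring,
          show (-(a:ℤ)+b) - (s:ℤ) - 1 = -(a:ℤ) - (s:ℤ) - 1 + b by ring] at hpas
      rw [iha] at hstep
      linarith [hstep, hpas]

lemma Fb_cast1 (s n m : ℕ) (h : s * m + 1 ≤ n) :
    ((n : ℚ) / ((n : ℚ) - (s : ℚ) * (m : ℚ))) * (((n - s * m).choose m : ℕ) : ℚ)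
      = Fb s (n : ℤ) m := by
  have hsm : s * m ≤ n := by omega
  cases m with
  | zero =>
    have hn : ((n:ℚ)) ≠ 0 := by
      have : 0 < n := by omega
      exact_mod_cast this.ne'
    simp [Fb_zero, hn]
  | succ j =>
    set x := n - s * (j+1) with hxdef
    have hx1 : 1 ≤ x := by omega
    have hn : n = x + s*(j+1) := by omega
    rw [Fb_succ]
    have e1 : (n:ℤ) - (s:ℤ)*((j:ℤ)+1) = (x:ℤ) := by
      rw [hn]; push_cast; ring
    rw [e1, show (x:ℤ) - 1 = ((x-1 : ℕ) : ℤ) by omega, Jb_natCast, Jb_natCast]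
    have hd : ((n:ℚ) - (s:ℚ)*((j:ℚ)+1)) = (x : ℚ) := by
      rw [hn]; push_cast; ring
    have hdc : ((j+1:ℕ):ℚ) = (j:ℚ)+1 := by push_cast; ring
    rw [hdc, hd]
    have hxq : ((x:ℚ)) ≠ 0 := by
      exact_mod_cast (by omega : 0 < x).ne'
    have hkey : x * ((x-1).choose j) = (x.choose (j+1)) * (j+1) := by
      have h2 := Nat.add_one_mul_choose_eq (x-1) j
      have h4 : x - 1 + 1 = x := by omega
      simp only [Nat.succ_eq_add_one, h4] at h2
      exact h2
    have hkeyQ : (x:ℚ) * (((x-1).choose j : ℕ) : ℚ)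
        = ((x.choose (j+1) : ℕ) : ℚ) * ((j:ℚ)+1) := by exact_mod_cast hkey
    have hnQ : (n:ℚ) = (x:ℚ) + (s:ℚ)*((j:ℚ)+1) := by rw [hn]; push_cast; ring
    field_simp
    linear_combination ((x.choose (j+1) : ℕ) : ℚ) * hnQ - (s:ℚ) * hkeyQ

lemma Fb_cast2 (s n k : ℕ) (hk : 1 ≤ k) (h : s * k + 1 ≤ n) :
    ((n : ℚ) / (k : ℚ)) * (((n - s * k - 1).choose (k-1) : ℕ) : ℚ)
      = Fb s (n : ℤ) k := by
  obtain ⟨j, rfl⟩ : ∃ j, k = j + 1 := ⟨k - 1, by omega⟩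
  set x := n - s * (j+1) with hxdef
  have hx1 : 1 ≤ x := by omega
  have hn : n = x + s*(j+1) := by omega
  have hch : n - s*(j+1) - 1 = x - 1 := by omega
  have hk1 : j + 1 - 1 = j := by omega
  rw [hch, hk1, Fb_succ]
  have e1 : (n:ℤ) - (s:ℤ)*((j:ℤ)+1) = (x:ℤ) := by
    rw [hn]; push_cast; ring
  rw [e1, show (x:ℤ) - 1 = ((x-1 : ℕ) : ℤ) by omega, Jb_natCast, Jb_natCast]
  have hkq : ((j+1:ℕ):ℚ) = (j:ℚ)+1 := by push_cast; ring
  rw [hkq]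
  have hkne : ((j:ℚ)+1) ≠ 0 := by positivity
  have hkey : x * ((x-1).choose j) = (x.choose (j+1)) * (j+1) := by
    have h2 := Nat.add_one_mul_choose_eq (x-1) j
    have h4 : x - 1 + 1 = x := by omega
    simp only [Nat.succ_eq_add_one, h4] at h2
    exact h2
  have hkeyQ : (x:ℚ) * (((x-1).choose j : ℕ) : ℚ)
      = ((x.choose (j+1) : ℕ) : ℚ) * ((j:ℚ)+1) := by exact_mod_cast hkey
  have hnQ : (n:ℚ) = (x:ℚ) + (s:ℚ)*((j:ℚ)+1) := by rw [hn]; push_cast; ring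
  field_simp
  linear_combination (((x-1).choose j : ℕ) : ℚ) * hnQ + hkeyQ

/-- Combinatorial identity: for `n1, n2 ≥ sk+1`,
`(n1+n2)/k * C(n1+n2-sk-1, k-1) = ∑_{j=0}^{k} (n1/(n1-sj)) C(n1-sj, j) * (n2/(n2-s(k-j))) C(n2-s(k-j), k-j)`. -/
theorem stmt_11 (s k n1 n2 : ℕ) (hs : 1 ≤ s) (hk : 1 ≤ k)
    (h1 : s * k + 1 ≤ n1) (h2 : s * k + 1 ≤ n2) :
    ((n1 + n2 : ℕ) : ℚ) / (k : ℚ) * ((n1 + n2 - s * k - 1).choose (k - 1) : ℚ) =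
      ∑ j ∈ Finset.range (k + 1),
        ((n1 : ℚ) / ((n1 : ℚ) - (s : ℚ) * (j : ℚ))) * ((n1 - s * j).choose j : ℚ) *
          (((n2 : ℚ) / ((n2 : ℚ) - (s : ℚ) * ((k : ℚ) - (j : ℚ)))) *
            ((n2 - s * (k - j)).choose (k - j) : ℚ)) := by
  have hL : ((n1 + n2 : ℕ) : ℚ) / (k : ℚ) * ((n1 + n2 - s * k - 1).choose (k - 1) : ℚ)
      = Fb s ((n1 + n2 : ℕ) : ℤ) k := Fb_cast2 s (n1+n2) k hk (by omega)
  rw [hL]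
  have hR : ∀ j ∈ Finset.range (k+1),
      ((n1 : ℚ) / ((n1 : ℚ) - (s : ℚ) * (j : ℚ))) * ((n1 - s * j).choose j : ℚ) *
          (((n2 : ℚ) / ((n2 : ℚ) - (s : ℚ) * ((k : ℚ) - (j : ℚ)))) *
            ((n2 - s * (k - j)).choose (k - j) : ℚ))
        = Fb s (n1 : ℤ) j * Fb s (n2 : ℤ) (k - j) := by
    intro j hj
    have hjk : j ≤ k := by
      have := Finset.mem_range.mp hj; omega
    have c1 := Fb_cast1 s n1 j (by nlinarith [Nat.mul_le_mul_left s hjk])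
    have c2 := Fb_cast1 s n2 (k - j) (by nlinarith [Nat.mul_le_mul_left s (Nat.sub_le k j)])
    rw [← c1, ← c2]
    have : ((k:ℚ) - (j:ℚ)) = ((k - j : ℕ) : ℚ) := by
      push_cast [hjk]; ring
    rw [this]
  rw [Finset.sum_congr rfl hR, Fb_conv s k (n1:ℤ) (n2:ℤ)]
  norm_cast
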